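/- Let (X, 𝒜, 𝒩) be a localizable MSN and ℰ ⊆ 𝒜 ∖ 𝒩 an almost disjointed family. Then the cardinality of the quotient of 𝒜 by the equivalence relation A ∼ B ⇔ A Δ B ∈ 𝒩 (symmetric difference) is at least 2^(card ℰ). -/

import Mathlib

open Set MeasureTheory ENNReal

namespace MSNPaper

variable {X Y : Type*}

/-- `A` is a σ-algebra of subsets of the carrier set `Z`. -/
def IsSigmaAlgebraOn (Z : Set X) (A : Set (Set X)) : Prop :=
  (∀ s ∈ A, s ⊆ Z) ∧ ∅ ∈ A ∧ (∀ s ∈ A, Z \ s ∈ A) ∧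
    ∀ f : ℕ → Set X, (∀ n, f n ∈ A) → (⋃ n, f n) ∈ A

/-- `N` is a σ-ideal of the σ-algebra `A`. -/
def IsSigmaIdeal (A N : Set (Set X)) : Prop :=
  N ⊆ A ∧ ∅ ∈ N ∧ (∀ s ∈ A, ∀ t ∈ N, s ⊆ t → s ∈ N) ∧
    ∀ f : ℕ → Set X, (∀ n, f n ∈ N) → (⋃ n, f n) ∈ N

/-- A measurable space with negligibles (MSN) on the carrier set `Z`. -/
def IsMSN (Z : Set X) (A N : Set (Set X)) : Prop :=
  IsSigmaAlgebraOn Z A ∧ IsSigmaIdeal A N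

/-- The MSN is saturated: every subset of a negligible set is negligible. -/
def Saturated (N : Set (Set X)) : Prop :=
  ∀ s t : Set X, s ⊆ t → t ∈ N → s ∈ N

/-- `U` is an `N`-essential upper bound of the collection `E`. -/
def IsEssUB (N E : Set (Set X)) (U : Set X) : Prop :=
  ∀ e ∈ E, e \ U ∈ N

/-- `S` is an `N`-essential supremum of the collection `E ⊆ A`. -/
def IsEssSup (A N E : Set (Set X)) (S : Set X) : Prop :=
  S ∈ A ∧ IsEssUB N E S ∧ ∀ U ∈ A, IsEssUB N E U → S \ U ∈ N

/-- Every collection of measurable sets admits an essential supremum. -/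
def Localizable (A N : Set (Set X)) : Prop :=
  ∀ E ⊆ A, ∃ S, IsEssSup A N E S

/-- The members of `E` pairwise intersect negligibly. -/
def AlmostDisjointed (N E : Set (Set X)) : Prop :=
  E.Pairwise fun e e' => e ∩ e' ∈ N

/-- Countable chain condition: almost disjointed families of non-negligible
measurable sets are countable. -/
def CCC (A N : Set (Set X)) : Prop :=
  ∀ E : Set (Set X), E ⊆ A → (∀ e ∈ E, e ∉ N) → AlmostDisjointed N E → E.Countable

/-- Local determination for an MSN with carrier `Z`. -/
def LocallyDetermined (Z : Set X) (A N : Set (Set X)) : Prop :=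
  ∀ E ⊆ A, IsEssSup A N E Z → ∀ s ⊆ Z, (∀ e ∈ E, s ∩ e ∈ A) → s ∈ A

/-- Trace of a collection of sets on a subset `Z`. -/
def Sub (A : Set (Set X)) (Z : Set X) : Set (Set X) := (· ∩ Z) '' A


section Helpers

variable {A N : Set (Set X)} {s t : Set X}

lemma A_compl (hA : IsSigmaAlgebraOn univ A) (hs : s ∈ A) : sᶜ ∈ A := by
  have := hA.2.2.1 s hs
  rwa [← Set.compl_eq_univ_diff] at this

lemma union_eq_pair (s t : Set X) : (⋃ n : ℕ, if n = 0 then s else t) = s ∪ t := by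
  apply subset_antisymm
  · exact iUnion_subset fun n => by split <;> simp
  · intro x hx
    rcases hx with h | h
    · exact mem_iUnion.2 ⟨0, by simpa⟩
    · exact mem_iUnion.2 ⟨1, by simpa⟩

lemma A_union (hA : IsSigmaAlgebraOn univ A) (hs : s ∈ A) (ht : t ∈ A) : s ∪ t ∈ A := by
  have h := hA.2.2.2 (fun n => if n = 0 then s else t) (fun n => by split <;> assumption)
  rwa [union_eq_pair] at h

lemma A_inter (hA : IsSigmaAlgebraOn univ A) (hs : s ∈ A) (ht : t ∈ A) : s ∩ t ∈ A := by
  have := A_compl hA (A_union hA (A_compl hA hs) (A_compl hA ht))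
  rwa [compl_union, compl_compl, compl_compl] at this

lemma A_diff (hA : IsSigmaAlgebraOn univ A) (hs : s ∈ A) (ht : t ∈ A) : s \ t ∈ A := by
  rw [diff_eq]; exact A_inter hA hs (A_compl hA ht)

lemma N_union (hN : IsSigmaIdeal A N) (hs : s ∈ N) (ht : t ∈ N) : s ∪ t ∈ N := by
  have h := hN.2.2.2 (fun n => if n = 0 then s else t) (fun n => by split <;> assumption)
  rwa [union_eq_pair] at h

lemma N_sub (hN : IsSigmaIdeal A N) (hsA : s ∈ A) (ht : t ∈ N) (h : s ⊆ t) : s ∈ N :=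
  hN.2.2.1 s hsA t ht h

/-- If `s ∈ A` meets every member of `G` negligibly, then `s` meets any essential
supremum of `G` negligibly. -/
lemma inter_esssup_mem (hMSN : IsMSN univ A N) (heA : s ∈ A)
    {G : Set (Set X)} (hGA : G ⊆ A) (hG : ∀ g ∈ G, g ∩ s ∈ N) {S : Set X}
    (hS : IsEssSup A N G S) : S ∩ s ∈ N := by
  obtain ⟨hA, hN⟩ := hMSN
  have hU : S \ s ∈ A := A_diff hA hS.1 heA
  have hub : IsEssUB N G (S \ s) := by
    intro g hg
    have h1 : g \ (S \ s) ⊆ (g \ S) ∪ (g ∩ s) := by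
      intro x hx; simp only [mem_diff, mem_union, mem_inter_iff] at *; tauto
    exact N_sub hN (A_diff hA (hGA hg) hU)
      (N_union hN (hS.2.1 g hg) (hG g hg)) h1
  have h2 := hS.2.2 (S \ s) hU hub
  have heq : S \ (S \ s) = S ∩ s := by ext x; simp [not_imp_not]
  rwa [heq] at h2

end Helpers



lemma symmDiff_mem_A {A : Set (Set X)} (hA : IsSigmaAlgebraOn univ A) {s t : Set X}
    (hs : s ∈ A) (ht : t ∈ A) : symmDiff s t ∈ A := by
  rw [Set.symmDiff_def]
  exact A_union hA (A_diff hA hs ht) (A_diff hA ht hs)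


/-- In a localizable MSN, if `E ⊆ A ∖ N` is almost disjointed, then the quotient of `A`
by equality modulo `N` (symmetric difference in `N`) has cardinality at least `2 ^ card E`. -/
theorem card_quot_ge {X : Type*} (A N : Set (Set X))
    (hMSN : IsMSN Set.univ A N) (hloc : Localizable A N)
    (E : Set (Set X)) (hEA : E ⊆ A) (hEN : ∀ e ∈ E, e ∉ N)
    (hdisj : AlmostDisjointed N E) :
    2 ^ Cardinal.mk ↥E ≤
      Cardinal.mk (Quot fun a b : ↥A => symmDiff (a : Set X) (b : Set X) ∈ N) := by
  obtain ⟨hA, hN⟩ := hMSN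
  set r : ↥A → ↥A → Prop := fun a b => symmDiff (a : Set X) (b : Set X) ∈ N with hr
  have hsup : ∀ F : Set ↥E, ∃ S, IsEssSup A N (Subtype.val '' F) S := by
    intro F
    apply hloc
    rintro s ⟨⟨e, he⟩, _, rfl⟩
    exact hEA he
  choose S hS using hsup
  have key : ∀ F G : Set ↥E, symmDiff (S F) (S G) ∈ N → ∀ e : ↥E, e ∈ F → e ∈ G := by
    intro F G hFG e heF
    by_contra heG
    have heAmem : (e : Set X) ∈ A := hEA e.2
    have h1 : (e : Set X) \ S F ∈ N := (hS F).2.1 e ⟨e, heF, rfl⟩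
    have h2 : S G ∩ (e : Set X) ∈ N := by
      refine inter_esssup_mem ⟨hA, hN⟩ heAmem ?_ ?_ (hS G)
      · rintro s ⟨⟨g, hg⟩, _, rfl⟩
        exact hEA hg
      · rintro s ⟨⟨g, hg⟩, hgG, rfl⟩
        refine hdisj hg e.2 ?_
        intro hge
        exact heG (by rwa [show e = (⟨g, hg⟩ : ↥E) from Subtype.ext hge.symm])
    have h3 : (e : Set X) ∩ (S F \ S G) ∈ N := by
      refine N_sub hN (A_inter hA heAmem (A_diff hA (hS F).1 (hS G).1)) hFG ?_
      intro x hx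
      rw [Set.symmDiff_def]
      exact Or.inl hx.2
    have h4 : (e : Set X) ∈ N := by
      refine N_sub hN heAmem (N_union hN (N_union hN h1 h3) h2) ?_
      intro x hx
      simp only [mem_union, mem_diff, mem_inter_iff]
      by_cases hF : x ∈ S F
      · by_cases hG2 : x ∈ S G
        · tauto
        · tauto
      · tauto
    exact hEN e e.2 h4
  have hequiv : Equivalence r := by
    constructor
    · intro a
      show symmDiff (a : Set X) (a : Set X) ∈ N
      rw [symmDiff_self]
      exact hN.2.1
    · intro a b hab
      show symmDiff (b : Set X) (a : Set X) ∈ N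
      rwa [symmDiff_comm]
    · intro a b c hab hbc
      show symmDiff (a : Set X) (c : Set X) ∈ N
      exact N_sub hN (symmDiff_mem_A hA a.2 c.2) (N_union hN hab hbc)
        (symmDiff_triangle (a : Set X) b c)
  have hinj : Function.Injective (fun F : Set ↥E => Quot.mk r ⟨S F, (hS F).1⟩) := by
    intro F G h
    have hrel : r ⟨S F, (hS F).1⟩ ⟨S G, (hS G).1⟩ :=
      hequiv.eqvGen_iff.1 (Quot.eqvGen_exact h)
    have hrel' : symmDiff (S F) (S G) ∈ N := hrel
    ext e
    constructor
    · exact fun he => key F G hrel' e he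
    · exact fun he => key G F (by rwa [symmDiff_comm] at hrel') e he
  calc 2 ^ Cardinal.mk ↥E = Cardinal.mk (Set ↥E) := (Cardinal.mk_set).symm
    _ ≤ _ := Cardinal.mk_le_of_injective hinj


end MSNPaper
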